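/- Let X be a locally compact Hausdorff space, V ⊆ X open nonempty, and θ : V → θ(V) ⊆ X a homeomorphism onto an open set such that the set { x ∈ V : θ(x) = x } has empty interior in V. Then inf{ ‖h · (h ∘ θ⁻¹)‖_∞ : h ∈ C₀(V), h ≥ 0, ‖h‖_∞ = 1 } = 0, where h ∘ θ⁻¹ is extended by zero outside θ(V). -/

import Mathlib

open scoped ZeroAtInfty Classical

open Set

/-- If `θ : V → θ(V)` is a partial homeomorphism of a locally compact Hausdorff space
whose fixed-point set has empty interior in `V`, then
`inf{ ‖h · (h ∘ θ⁻¹)‖ : h ∈ C₀(V)₊, ‖h‖ = 1 } = 0`, where `h ∘ θ⁻¹` is extended by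
zero outside `θ(V)`. -/
theorem inf_norm_mul_comp_eq_zero_of_topFree
    {X : Type*} [TopologicalSpace X] [LocallyCompactSpace X] [T2Space X]
    (V : Set X) (hV : IsOpen V) (hne : V.Nonempty)
    (τ σ : X → X)
    (hτcont : ContinuousOn τ V) (hσcont : ContinuousOn σ (τ '' V))
    (hopen : IsOpen (τ '' V))
    (hστ : ∀ x ∈ V, σ (τ x) = x) (hτσ : ∀ y ∈ τ '' V, τ (σ y) = y)
    (hfix : interior {x : X | x ∈ V ∧ τ x = x} = ∅) :
    sInf {c : ℝ | ∃ h : C₀(X, ℝ),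
        (∀ x ∉ V, h x = 0) ∧ (∀ x, 0 ≤ h x) ∧ ‖h‖ = 1 ∧
        c = ⨆ x, |h x * (if x ∈ τ '' V then h (σ x) else 0)|} = 0 := by
  set S := {c : ℝ | ∃ h : C₀(X, ℝ),
        (∀ x ∉ V, h x = 0) ∧ (∀ x, 0 ≤ h x) ∧ ‖h‖ = 1 ∧
        c = ⨆ x, |h x * (if x ∈ τ '' V then h (σ x) else 0)|} with hS
  -- Step 1: find a point of V moved by τ.
  obtain ⟨x₀, hx₀V, hx₀⟩ : ∃ x ∈ V, τ x ≠ x := by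
    by_contra hc
    push_neg at hc
    have : V ⊆ interior {x : X | x ∈ V ∧ τ x = x} :=
      hV.subset_interior_iff.mpr (fun x hx => ⟨hx, hc x hx⟩)
    rw [hfix] at this
    exact hne.not_subset_empty this
  have : Nonempty X := ⟨x₀⟩
  -- Step 2: find open nonempty Y ⊆ V with τ '' Y disjoint from Y.
  obtain ⟨U₁, U₂, hU₁, hU₂, hxU₁, hxU₂, hdisj⟩ :=
    t2_separation (show τ x₀ ≠ x₀ from hx₀)
  set Y : Set X := (V ∩ τ ⁻¹' U₁) ∩ U₂ with hY
  have hYopen : IsOpen Y :=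
    (hτcont.isOpen_inter_preimage hV hU₁).inter hU₂
  have hYV : Y ⊆ V := fun x hx => hx.1.1
  have hx₀Y : x₀ ∈ Y := ⟨⟨hx₀V, by simpa using hxU₁⟩, hxU₂⟩
  have hYdisj : ∀ x ∈ Y, ∀ y ∈ Y, τ x ≠ y := by
    intro x hx y hy hxy
    have h1 : τ x ∈ U₁ := hx.1.2
    have h2 : y ∈ U₂ := hy.2
    rw [hxy] at h1
    exact hdisj.ne_of_mem h1 h2 rfl
  -- Step 3: build the bump function.
  obtain ⟨f, hf1, hf0, hfc, hf01⟩ :=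
    exists_continuous_one_zero_of_isCompact (isCompact_singleton (x := x₀))
      (hYopen.isClosed_compl) (by simpa [disjoint_singleton_left] using hx₀Y)
  set h : C₀(X, ℝ) := ⟨f, hfc.is_zero_at_infty⟩ with hh
  have hhval : ∀ x, h x = f x := fun x => rfl
  have hsupp : ∀ x ∉ Y, h x = 0 := fun x hx => hf0 hx
  have hpos : ∀ x, 0 ≤ h x := fun x => (hf01 x).1
  have hone : h x₀ = 1 := hf1 rfl
  have hnorm : ‖h‖ = 1 := by
    rw [← ZeroAtInftyContinuousMap.norm_toBCF_eq_norm]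
    apply le_antisymm
    · exact BoundedContinuousFunction.norm_le_of_nonempty.mpr fun x => by
        simpa [Real.norm_eq_abs, abs_of_nonneg (hpos x)] using (show h x ≤ 1 from (hf01 x).2)
    · calc (1 : ℝ) = ‖h x₀‖ := by rw [hone]; simp
        _ ≤ ‖h.toBCF‖ := BoundedContinuousFunction.norm_coe_le_norm h.toBCF x₀
  -- Step 4: the product vanishes identically.
  have hprod : ∀ x, h x * (if x ∈ τ '' V then h (σ x) else 0) = 0 := by
    intro x
    by_cases hx : x ∈ τ '' V
    · simp only [hx, if_pos]
      by_cases hxY : x ∈ Y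
      · by_cases hσY : σ x ∈ Y
        · exact absurd (hτσ x hx) (hYdisj _ hσY _ hxY)
        · rw [hsupp _ hσY, mul_zero]
      · rw [hsupp _ hxY, zero_mul]
    · simp [hx]
  have hmem : (0 : ℝ) ∈ S := by
    refine ⟨h, fun x hx => hsupp x (fun hY' => hx (hYV hY')), hpos, hnorm, ?_⟩
    simp only [hprod, abs_zero, ciSup_const]
  have hlb : ∀ c ∈ S, (0 : ℝ) ≤ c := by
    rintro c ⟨g, -, -, -, rfl⟩
    exact Real.iSup_nonneg fun x => abs_nonneg _
  exact le_antisymm (csInf_le ⟨0, hlb⟩ hmem) (le_csInf ⟨0, hmem⟩ hlb)
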